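/- Every self-adjoint (possibly unbounded) operator T on a Hilbert space H admits a decomposition T = A⁻¹B where A and B are bounded self-adjoint operators, A is injective, and AB = BA. -/

import Mathlib

open LinearPMap
open scoped LinearPMap InnerProduct

variable {H : Type*} [NormedAddCommGroup H] [InnerProductSpace ℂ H] [CompleteSpace H]

/-- The natural domain of the composition `g ∘ f`: `{x ∈ dom f : f x ∈ dom g}`. -/
def pcompDomain (g f : H →ₗ.[ℂ] H) : Submodule ℂ H where
  carrier := {x | ∃ hx : x ∈ f.domain, f ⟨x, hx⟩ ∈ g.domain}
  add_mem' := by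
    rintro a b ⟨ha, ha'⟩ ⟨hb, hb'⟩
    refine ⟨add_mem ha hb, ?_⟩
    have h : f ⟨a + b, add_mem ha hb⟩ = f ⟨a, ha⟩ + f ⟨b, hb⟩ := f.map_add ⟨a, ha⟩ ⟨b, hb⟩
    rw [h]; exact add_mem ha' hb'
  zero_mem' := ⟨zero_mem _, by
    have h : f ⟨0, zero_mem _⟩ = 0 := f.map_zero
    rw [h]; exact zero_mem _⟩
  smul_mem' := by
    rintro c a ⟨ha, ha'⟩
    refine ⟨Submodule.smul_mem _ c ha, ?_⟩
    have h : f ⟨c • a, Submodule.smul_mem _ c ha⟩ = c • f ⟨a, ha⟩ := f.map_smul c ⟨a, ha⟩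
    rw [h]; exact Submodule.smul_mem _ c ha'

/-- Composition `g ∘ f` of unbounded operators, with its natural domain
`{x ∈ dom f : f x ∈ dom g}`. -/
noncomputable def pcomp (g f : H →ₗ.[ℂ] H) : H →ₗ.[ℂ] H :=
  g.comp (f.domRestrict (pcompDomain g f)) (by
    rintro ⟨x, hx⟩
    obtain ⟨h1, h2⟩ := hx.1
    have : f.domRestrict (pcompDomain g f) ⟨x, hx⟩ = f ⟨x, h1⟩ :=
      LinearPMap.domRestrict_apply rfl
    rw [this]; exact h2)

/-- The identity as an unbounded operator. -/
noncomputable def pid : H →ₗ.[ℂ] H := LinearMap.id.toPMap ⊤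

noncomputable example (T : H →ₗ.[ℂ] H) : H →ₗ.[ℂ] H := pid + pcomp T† T

open scoped InnerProductSpace

/-- Auxiliary: the "graph-like" submodule of `WithLp 2 (H × H)` consisting of pairs `(a, b)`
satisfying `⟪b, v⟫ = ⟪a, T v⟫` for all `v` in the domain of `T`. -/
noncomputable def graphL2 (T : H →ₗ.[ℂ] H) : Submodule ℂ (WithLp 2 (H × H)) where
  carrier := {p | ∀ v : T.domain, ⟪p.snd, (v : H)⟫_ℂ = ⟪p.fst, (T v : H)⟫_ℂ}
  add_mem' := by
    intro a b ha hb v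
    show ⟪(a + b).snd, (v : H)⟫_ℂ = ⟪(a + b).fst, (T v : H)⟫_ℂ
    rw [WithLp.add_snd, WithLp.add_fst, inner_add_left, inner_add_left, ha v, hb v]
  zero_mem' := by
    intro v
    show ⟪(0 : WithLp 2 (H × H)).snd, (v : H)⟫_ℂ = ⟪(0 : WithLp 2 (H × H)).fst, (T v : H)⟫_ℂ
    rw [WithLp.zero_snd, WithLp.zero_fst, inner_zero_left, inner_zero_left]
  smul_mem' := by
    intro c a ha v
    show ⟪(c • a).snd, (v : H)⟫_ℂ = ⟪(c • a).fst, (T v : H)⟫_ℂ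
    rw [WithLp.smul_snd, WithLp.smul_fst, inner_smul_left, inner_smul_left, ha v]

theorem mem_graphL2 {T : H →ₗ.[ℂ] H} {p : WithLp 2 (H × H)} :
    p ∈ graphL2 T ↔ ∀ v : T.domain, ⟪p.snd, (v : H)⟫_ℂ = ⟪p.fst, (T v : H)⟫_ℂ :=
  Iff.rfl

theorem graphL2_closed (T : H →ₗ.[ℂ] H) : IsClosed ((graphL2 T : Submodule ℂ (WithLp 2 (H × H))) : Set (WithLp 2 (H × H))) := by
  have hc1 : Continuous fun p : WithLp 2 (H × H) => p.fst :=
    continuous_fst.comp (WithLp.prodContinuousLinearEquiv 2 ℂ H H).continuous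
  have hc2 : Continuous fun p : WithLp 2 (H × H) => p.snd :=
    continuous_snd.comp (WithLp.prodContinuousLinearEquiv 2 ℂ H H).continuous
  have : ((graphL2 T : Submodule ℂ (WithLp 2 (H × H))) : Set (WithLp 2 (H × H))) =
      ⋂ v : T.domain, {p : WithLp 2 (H × H) | ⟪p.snd, (v : H)⟫_ℂ = ⟪p.fst, (T v : H)⟫_ℂ} := by
    ext p
    simp only [Set.mem_iInter, SetLike.mem_coe, mem_graphL2, Set.mem_setOf_eq]
  rw [this]
  exact isClosed_iInter fun v =>
    isClosed_eq (hc2.inner continuous_const) (hc1.inner continuous_const)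

theorem stmt11 (T : H →ₗ.[ℂ] H) (hsa : IsSelfAdjoint T) :
    ∃ A B : H →L[ℂ] H, Function.Injective A ∧ IsSelfAdjoint A ∧ IsSelfAdjoint B ∧
      A ∘L B = B ∘L A ∧
      (∀ x : H, x ∈ T.domain ↔ B x ∈ Set.range A) ∧
      (∀ x : T.domain, A (T x) = B (x : H)) := by
  classical
  have hd : Dense (T.domain : Set H) := hsa.dense_domain
  have heq : T† = T := hsa
  have symm0 : ∀ v w : T.domain, ⟪(T v : H), (w : H)⟫_ℂ = ⟪(v : H), (T w : H)⟫_ℂ := by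
    have hF := LinearPMap.adjoint_isFormalAdjoint hd
    rw [heq] at hF
    exact fun v w => hF v w
  have symm' : ∀ (a b : H) (ha : a ∈ T.domain) (hb : b ∈ T.domain),
      ⟪(T ⟨a, ha⟩ : H), b⟫_ℂ = ⟪a, (T ⟨b, hb⟩ : H)⟫_ℂ := fun a b ha hb =>
    symm0 ⟨a, ha⟩ ⟨b, hb⟩
  set G : Submodule ℂ (WithLp 2 (H × H)) := graphL2 T with hG
  haveI : CompleteSpace G := (graphL2_closed T).completeSpace_coe
  set e : WithLp 2 (H × H) ≃L[ℂ] H × H := WithLp.prodContinuousLinearEquiv 2 ℂ H H with he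
  set P : WithLp 2 (H × H) →L[ℂ] G := G.orthogonalProjectionOnto with hP
  set A : H →L[ℂ] H :=
    ((ContinuousLinearMap.fst ℂ H H).comp e.toContinuousLinearMap).comp
      ((G.subtypeL.comp P).comp
        (e.symm.toContinuousLinearMap.comp (ContinuousLinearMap.inl ℂ H H))) with hAdef
  set B : H →L[ℂ] H :=
    ((ContinuousLinearMap.snd ℂ H H).comp e.toContinuousLinearMap).comp
      ((G.subtypeL.comp P).comp
        (e.symm.toContinuousLinearMap.comp (ContinuousLinearMap.inl ℂ H H))) with hBdef
  -- the point `(h, 0)` of `WithLp 2 (H × H)`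
  have hApp : ∀ h : H, A h = ((P (e.symm (h, 0)) : WithLp 2 (H × H))).fst := fun h => rfl
  have hBpp : ∀ h : H, B h = ((P (e.symm (h, 0)) : WithLp 2 (H × H))).snd := fun h => rfl
  -- membership of the projection in G
  have hG1 : ∀ (h : H) (v : T.domain), ⟪B h, (v : H)⟫_ℂ = ⟪A h, (T v : H)⟫_ℂ := by
    intro h v
    have hm : (P (e.symm (h, 0)) : WithLp 2 (H × H)) ∈ G := (P (e.symm (h, 0))).2
    rw [hApp, hBpp]
    exact (mem_graphL2.mp hm) v
  -- elements of G of graph type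
  have hgr : ∀ v : T.domain, e.symm ((v : H), (T v : H)) ∈ G := by
    intro v
    rw [mem_graphL2]
    intro w
    exact symm0 v w
  -- orthogonality of the residual
  have hsub : ∀ (h : H) (v : T.domain), ⟪h - A h, (v : H)⟫_ℂ = ⟪B h, (T v : H)⟫_ℂ := by
    intro h v
    have hq : e.symm (h, 0) - (P (e.symm (h, 0)) : WithLp 2 (H × H)) ∈ Gᗮ :=
      Submodule.sub_starProjection_mem_orthogonal (K := G) (e.symm (h, 0))
    have h0 := (Submodule.mem_orthogonal G _).mp hq _ (hgr v)
    have h0' : ⟪(v : H), h - A h⟫_ℂ + ⟪(T v : H), (0 : H) - B h⟫_ℂ = 0 := h0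
    rw [zero_sub, inner_neg_right, add_neg_eq_zero] at h0'
    calc ⟪h - A h, (v : H)⟫_ℂ = (starRingEnd ℂ) ⟪(v : H), h - A h⟫_ℂ :=
          (inner_conj_symm _ _).symm
      _ = (starRingEnd ℂ) ⟪(T v : H), B h⟫_ℂ := by rw [h0']
      _ = ⟪B h, (T v : H)⟫_ℂ := inner_conj_symm _ _
  -- extraction of domain membership and value
  have extract : ∀ a b : H, (∀ v : T.domain, ⟪b, (v : H)⟫_ℂ = ⟪a, (T v : H)⟫_ℂ) →
      ∃ hm : a ∈ T.domain, (T ⟨a, hm⟩ : H) = b := by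
    intro a b hab
    have hm' : a ∈ T†.domain := LinearPMap.mem_adjoint_domain_of_exists a ⟨b, hab⟩
    rw [heq] at hm'
    refine ⟨hm', hd.eq_of_inner_left (𝕜 := ℂ) fun v' hv' => ?_⟩
    obtain ⟨v, rfl⟩ : ∃ v : T.domain, (v : H) = v' := ⟨⟨v', hv'⟩, rfl⟩
    rw [symm' a (v : H) hm' v.2]
    exact (hab v).symm
  have key : ∀ h : H, ∃ (hA : A h ∈ T.domain) (hB : B h ∈ T.domain),
      (T ⟨A h, hA⟩ : H) = B h ∧ (T ⟨B h, hB⟩ : H) = h - A h := by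
    intro h
    obtain ⟨hA, hTA⟩ := extract (A h) (B h) (hG1 h)
    obtain ⟨hB, hTB⟩ := extract (B h) (h - A h) (hsub h)
    exact ⟨hA, hB, hTA, hTB⟩
  choose memA memB hTA hTB using key
  -- basic inner product identities
  have e1 : ∀ h k : H, ⟪A h, k⟫_ℂ - ⟪A h, A k⟫_ℂ = ⟪B h, B k⟫_ℂ := by
    intro h k
    have s1 := symm' (A h) (B k) (memA h) (memB k)
    rw [hTA h, hTB k] at s1
    rw [← inner_sub_right]
    exact s1.symm
  have e2 : ∀ h k : H, ⟪h, A k⟫_ℂ - ⟪A h, A k⟫_ℂ = ⟪B h, B k⟫_ℂ := by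
    intro h k
    have s1 := symm' (B h) (A k) (memB h) (memA k)
    rw [hTB h, hTA k] at s1
    rw [← inner_sub_left]
    exact s1
  have innerA : ∀ h k : H, ⟪A h, k⟫_ℂ = ⟪h, A k⟫_ℂ := by
    intro h k
    linear_combination e1 h k - e2 h k
  have f1 : ∀ h k : H, ⟪B h, k⟫_ℂ - ⟪B h, A k⟫_ℂ = ⟪h - A h, B k⟫_ℂ := by
    intro h k
    have s1 := symm' (B h) (B k) (memB h) (memB k)
    rw [hTB h, hTB k] at s1
    rw [← inner_sub_right]
    exact s1.symm
  have f2 : ∀ h k : H, ⟪B h, A k⟫_ℂ = ⟪A h, B k⟫_ℂ := by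
    intro h k
    have s1 := symm' (A h) (A k) (memA h) (memA k)
    rw [hTA h, hTA k] at s1
    exact s1
  have f3 : ∀ h k : H, ⟪h, B k⟫_ℂ - ⟪A h, B k⟫_ℂ = ⟪h - A h, B k⟫_ℂ := by
    intro h k
    rw [inner_sub_left]
  have innerB : ∀ h k : H, ⟪B h, k⟫_ℂ = ⟪h, B k⟫_ℂ := by
    intro h k
    linear_combination f1 h k - f3 h k + f2 h k
  -- injectivity of A
  have hinj0 : ∀ h : H, A h = 0 → h = 0 := by
    intro h h0
    have hBz : B h = 0 := by
      rw [← hTA h]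
      have hz : (⟨A h, memA h⟩ : T.domain) = 0 := Subtype.ext h0
      rw [hz, T.map_zero]
    have h2 : h - A h = 0 := by
      rw [← hTB h]
      have hz : (⟨B h, memB h⟩ : T.domain) = 0 := Subtype.ext hBz
      rw [hz, T.map_zero]
    rw [h0, sub_zero] at h2
    exact h2
  have hlast : ∀ x : T.domain, A (T x) = B (x : H) := by
    intro x
    refine ext_inner_right ℂ fun k => ?_
    have s1 := symm' (x : H) (A k) x.2 (memA k)
    rw [hTA k] at s1
    calc ⟪A (T x), k⟫_ℂ = ⟪(T x : H), A k⟫_ℂ := innerA _ _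
      _ = ⟪(x : H), B k⟫_ℂ := s1
      _ = ⟪B (x : H), k⟫_ℂ := (innerB (x : H) k).symm
  refine ⟨A, B, ?_, ?_, ?_, ?_, ?_, hlast⟩
  · -- injectivity
    intro x y hxy
    have h0 : A (x - y) = 0 := by rw [A.map_sub, hxy, sub_self]
    exact sub_eq_zero.mp (hinj0 _ h0)
  · exact (ContinuousLinearMap.isSelfAdjoint_iff_isSymmetric).mpr fun x y => innerA x y
  · exact (ContinuousLinearMap.isSelfAdjoint_iff_isSymmetric).mpr fun x y => innerB x y
  · refine ContinuousLinearMap.ext fun h => ext_inner_right ℂ fun k => ?_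
    show ⟪A (B h), k⟫_ℂ = ⟪B (A h), k⟫_ℂ
    rw [innerA (B h) k, innerB (A h) k]
    exact f2 h k
  · intro x
    constructor
    · intro hx
      exact ⟨(T ⟨x, hx⟩ : H), hlast ⟨x, hx⟩⟩
    · rintro ⟨z, hz⟩
      -- hz : A z = B x
      have hxA : x - A x = B z := by
        rw [← hTB x]
        have hzz : (⟨B x, memB x⟩ : T.domain) = ⟨A z, memA z⟩ := Subtype.ext hz.symm
        rw [hzz, hTA z]
      have hw : ∀ v : T.domain, ⟪z, (v : H)⟫_ℂ = ⟪x, (T v : H)⟫_ℂ := by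
        intro v
        have s1 := symm' (A x) (v : H) (memA x) v.2
        rw [hTA x] at s1
        -- s1 : ⟪B x, T v⟫??? careful
        have s2 := symm' (B z) (v : H) (memB z) v.2
        rw [hTB z] at s2
        -- s2 : ⟪z - A z, v⟫ = ⟪B z, T v⟫
        have hsplit : ⟪x, (T v : H)⟫_ℂ = ⟪A x, (T v : H)⟫_ℂ + ⟪x - A x, (T v : H)⟫_ℂ := by
          rw [← inner_add_left]
          congr 1
          abel
        rw [hsplit, hxA, ← s2, ← s1]
        -- now: ⟪z, v⟫ = ⟪B x, v⟫??? fix below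
        rw [← hz]
        rw [innerA z (v : H)]
        rw [inner_sub_left, innerA z (v : H)]
        ring
      have hmem : x ∈ T†.domain := LinearPMap.mem_adjoint_domain_of_exists x ⟨z, hw⟩
      rwa [heq] at hmem
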